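/- Tail bound for the ranking phase of the protocol (probabilistic core of the ranking subphase lemma): Let n ≥ 2 and k ≥ 1 be integers, γ > 0 a real number, and let a < b ≤ n be positive integers with a ≥ n/2^k and b - a ≤ n/2^k. Let T = T_1 + ... + T_{b-a}, where the T_i are independent geometric random variables and T_i has success probability (b-i)/(n·(n-1)). Then P(T ≤ 2n² + 2γ·2^k·n·log₂ n) ≥ 1 - n^{-γ}. -/

import Mathlib

open MeasureTheory ProbabilityTheory Real

lemma lint_nat {Ω : Type*} [MeasurableSpace Ω] (μ : Measure Ω) (X : Ω → ℕ)
    (hX : Measurable X) (f : ℕ → ENNReal) :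
    ∫⁻ ω, f (X ω) ∂μ = ∑' j, f j * μ {ω | X ω = j} := by
  rw [← lintegral_map (by exact measurable_from_top) hX, lintegral_countable']
  congr 1; ext j
  rw [Measure.map_apply hX (measurableSet_singleton j)]; rfl

section pervar
variable {Ω : Type*} [MeasurableSpace Ω] (μ : Measure Ω) [IsProbabilityMeasure μ]
  (X : Ω → ℕ) (hX : Measurable X) (q s : ℝ) (hq0 : 0 < q) (hq1 : q < 1)
  (hs0 : 0 ≤ s) (hsq : s ≤ q / 2)
  (hpmf : ∀ j : ℕ, 1 ≤ j → μ {ω | X ω = j} = ENNReal.ofReal ((1 - q) ^ (j - 1) * q))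

include hX hq0 hq1 hs0 hsq hpmf

lemma pmf_zero : μ {ω | X ω = 0} = 0 := by
  have h1q : (0:ℝ) ≤ 1 - q := by linarith
  have h1 : (1:ENNReal) = ∑' j, μ {ω | X ω = j} := by
    have := lint_nat μ X hX (fun _ => 1)
    simpa using this
  have h2 : ∑' j : ℕ, μ {ω | X ω = j + 1} = 1 := by
    have hsummable : Summable (fun j : ℕ => (1 - q) ^ j * q) :=
      (summable_geometric_of_lt_one h1q (by linarith)).mul_right q
    calc ∑' j : ℕ, μ {ω | X ω = j + 1}
        = ∑' j : ℕ, ENNReal.ofReal ((1 - q) ^ j * q) := by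
          refine tsum_congr fun j => ?_
          rw [hpmf (j+1) (Nat.le_add_left 1 j)]; simp
      _ = ENNReal.ofReal (∑' j : ℕ, (1 - q) ^ j * q) := by
          rw [ENNReal.ofReal_tsum_of_nonneg (fun j => by positivity) hsummable]
      _ = 1 := by
          rw [tsum_mul_right, tsum_geometric_of_lt_one h1q (by linarith),
            show 1 - (1 - q) = q by ring, inv_mul_cancel₀ hq0.ne']
          simp
  have h3 : (1:ENNReal) + μ {ω | X ω = 0} = 1 + 0 := by
    nth_rewrite 2 [h1]
    rw [tsum_eq_zero_add' (by simp [ENNReal.summable]), h2, add_comm, add_zero]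
  exact (ENNReal.add_right_inj ENNReal.one_ne_top).mp h3

lemma lint_exp : ∫⁻ ω, ENNReal.ofReal (Real.exp (s * X ω)) ∂μ
    = ENNReal.ofReal (∑' j : ℕ, Real.exp (s * (j + 1)) * ((1 - q) ^ j * q)) ∧
    Summable (fun j : ℕ => Real.exp (s * (j + 1)) * ((1 - q) ^ j * q)) ∧
    (∑' j : ℕ, Real.exp (s * (j + 1)) * ((1 - q) ^ j * q)) ≤ 2 := by
  have h1q : (0:ℝ) ≤ 1 - q := by linarith
  have hs1 : s < 1 := by linarith
  have h1s : 0 < 1 - s := by linarith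
  have hr0 : 0 ≤ (1 - q) / (1 - s) := by positivity
  have hr1 : (1 - q) / (1 - s) < 1 := by
    rw [div_lt_one h1s]; linarith
  have hqs : 0 < q - s := by linarith
  -- exp s ≤ (1-s)⁻¹
  have hexps : Real.exp s ≤ (1 - s)⁻¹ := by
    have h2 : 1 - s ≤ (Real.exp s)⁻¹ := by
      rw [← Real.exp_neg]; linarith [Real.add_one_le_exp (-s)]
    calc Real.exp s = ((Real.exp s)⁻¹)⁻¹ := (inv_inv _).symm
      _ ≤ (1 - s)⁻¹ := by
        apply inv_anti₀ h1s h2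
  -- termwise bound
  have hterm : ∀ j : ℕ, Real.exp (s * (j + 1)) * ((1 - q) ^ j * q)
      ≤ (q / (1 - s)) * ((1 - q) / (1 - s)) ^ j := by
    intro j
    have h1 : Real.exp (s * (j + 1)) = (Real.exp s) ^ (j + 1) := by
      rw [← Real.exp_nat_mul]; congr 1; push_cast; ring
    have h2 : (Real.exp s) ^ (j + 1) ≤ ((1 - s)⁻¹) ^ (j + 1) :=
      pow_le_pow_left₀ (Real.exp_pos _).le hexps _
    calc Real.exp (s * (j + 1)) * ((1 - q) ^ j * q)
        ≤ ((1 - s)⁻¹) ^ (j + 1) * ((1 - q) ^ j * q) := by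
          refine mul_le_mul_of_nonneg_right (h1 ▸ h2) (by positivity)
      _ = (q / (1 - s)) * ((1 - q) / (1 - s)) ^ j := by
          rw [pow_succ]
          rw [div_pow, div_eq_mul_inv q, div_eq_mul_inv ((1 - q) ^ j), ← inv_pow]
          ring
  have hsum2 : Summable (fun j : ℕ => (q / (1 - s)) * ((1 - q) / (1 - s)) ^ j) :=
    (summable_geometric_of_lt_one hr0 hr1).mul_left _
  have hsum1 : Summable (fun j : ℕ => Real.exp (s * (j + 1)) * ((1 - q) ^ j * q)) :=
    Summable.of_nonneg_of_le (fun j => by positivity) hterm hsum2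
  refine ⟨?_, hsum1, ?_⟩
  · rw [lint_nat μ X hX (fun j : ℕ => ENNReal.ofReal (Real.exp (s * j))),
      tsum_eq_zero_add' (by simp [ENNReal.summable]),
      pmf_zero μ X hX q s hq0 hq1 hs0 hsq hpmf, mul_zero, zero_add]
    calc ∑' (j : ℕ), ENNReal.ofReal (Real.exp (s * ((j:ℕ) + 1 : ℕ))) * μ {ω | X ω = j + 1}
        = ∑' j : ℕ, ENNReal.ofReal (Real.exp (s * ((j:ℝ) + 1)) * ((1 - q) ^ j * q)) := by
          refine tsum_congr fun j => ?_
          rw [hpmf (j+1) (Nat.le_add_left 1 j), ← ENNReal.ofReal_mul (Real.exp_pos _).le]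
          simp only [Nat.add_sub_cancel]
          congr 2
          push_cast; ring
      _ = ENNReal.ofReal (∑' j : ℕ, Real.exp (s * ((j:ℝ) + 1)) * ((1 - q) ^ j * q)) :=
          (ENNReal.ofReal_tsum_of_nonneg (fun j => by positivity) hsum1).symm
  · calc (∑' j : ℕ, Real.exp (s * (j + 1)) * ((1 - q) ^ j * q))
        ≤ ∑' j : ℕ, (q / (1 - s)) * ((1 - q) / (1 - s)) ^ j :=
          Summable.tsum_le_tsum hterm hsum1 hsum2
      _ = (q / (1 - s)) * (1 - (1 - q) / (1 - s))⁻¹ := by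
          rw [tsum_mul_left, tsum_geometric_of_lt_one hr0 hr1]
      _ = q / (q - s) := by
          rw [show 1 - (1 - q) / (1 - s) = (q - s)/(1-s) by field_simp; ring]
          field_simp
      _ ≤ 2 := by
          rw [div_le_iff₀ hqs]; linarith


lemma pervar_integrable : Integrable (fun ω => Real.exp (s * (X ω : ℝ))) μ := by
  obtain ⟨hlint, -, hle⟩ := lint_exp μ X hX q s hq0 hq1 hs0 hsq hpmf
  have hmeasX : Measurable (fun ω => ((X ω : ℕ) : ℝ)) := measurable_from_top.comp hX
  refine ⟨((hmeasX.const_mul s).exp).aestronglyMeasurable, ?_⟩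
  rw [hasFiniteIntegral_iff_ofReal (Filter.Eventually.of_forall fun ω => (Real.exp_pos _).le)]
  rw [hlint]
  exact ENNReal.ofReal_lt_top

lemma pervar_mgf : mgf (fun ω => (X ω : ℝ)) μ s ≤ 2 := by
  obtain ⟨hlint, hsum, hle⟩ := lint_exp μ X hX q s hq0 hq1 hs0 hsq hpmf
  have hmeasX : Measurable (fun ω => ((X ω : ℕ) : ℝ)) := measurable_from_top.comp hX
  have : mgf (fun ω => (X ω : ℝ)) μ s
      = (∫⁻ ω, ENNReal.ofReal (Real.exp (s * (X ω : ℝ))) ∂μ).toReal := by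
    rw [mgf, integral_eq_lintegral_of_nonneg_ae
      (Filter.Eventually.of_forall fun ω => (Real.exp_pos _).le)
      ((hmeasX.const_mul s).exp).aestronglyMeasurable]
  have h1q : (0:ℝ) ≤ 1 - q := by linarith
  rw [this, hlint, ENNReal.toReal_ofReal (tsum_nonneg fun j => by positivity)]
  exact hle

end pervar

theorem ranking_phase_tail
    {Ω : Type*} [MeasurableSpace Ω] (μ : Measure Ω) [IsProbabilityMeasure μ]
    (n k : ℕ) (hn : 2 ≤ n) (hk : 1 ≤ k)
    (γ : ℝ) (hγ : 0 < γ)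
    (a b : ℕ) (ha0 : 0 < a) (hab : a < b) (hbn : b ≤ n)
    (halow : (n : ℝ) / 2 ^ k ≤ a) (hba : (b : ℝ) - a ≤ (n : ℝ) / 2 ^ k)
    (T : Fin (b - a) → Ω → ℕ)
    (hmeas : ∀ i, Measurable (T i))
    (hindep : iIndepFun T μ)
    (hgeom : ∀ i : Fin (b - a), ∀ j : ℕ, 1 ≤ j →
      μ {ω | T i ω = j}
        = ENNReal.ofReal
            ((1 - ((b : ℝ) - ((i : ℝ) + 1)) / ((n : ℝ) * ((n : ℝ) - 1))) ^ (j - 1)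
              * (((b : ℝ) - ((i : ℝ) + 1)) / ((n : ℝ) * ((n : ℝ) - 1))))) :
    ENNReal.ofReal (1 - (n : ℝ) ^ (-γ))
      ≤ μ {ω | ∑ i, (T i ω : ℝ)
              ≤ 2 * (n : ℝ) ^ 2 + 2 * γ * 2 ^ k * (n : ℝ) * Real.logb 2 n} := by
  -- basic real facts
  have hn2 : (2:ℝ) ≤ n := by exact_mod_cast hn
  have hn1 : (1:ℝ) ≤ (n:ℝ) - 1 := by linarith
  have hN : (0:ℝ) < (n:ℝ) * ((n:ℝ) - 1) := by nlinarith
  have h2k : (1:ℝ) ≤ 2 ^ k := one_le_pow₀ (by norm_num)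
  have h2k0 : (0:ℝ) < 2 ^ k := by positivity
  have ha1 : (1:ℝ) ≤ a := by exact_mod_cast ha0
  have hm : ((b - a : ℕ) : ℝ) = (b:ℝ) - a := by
    push_cast [Nat.cast_sub hab.le]; ring
  have ham : ((b - a : ℕ) : ℝ) ≤ a := by rw [hm]; linarith
  have hna : (n:ℝ) ≤ a * 2 ^ k := by
    rw [div_le_iff₀ h2k0] at halow; linarith
  set s : ℝ := (a:ℝ) / (2 * ((n:ℝ) * ((n:ℝ) - 1))) with hs_def
  have hs0 : 0 < s := by positivity
  set q : Fin (b - a) → ℝ :=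
    fun i => ((b : ℝ) - ((i : ℝ) + 1)) / ((n : ℝ) * ((n : ℝ) - 1)) with hq_def
  have hqa : ∀ i : Fin (b - a), (a:ℝ) ≤ (b : ℝ) - ((i : ℝ) + 1) := by
    intro i
    have : ((i:ℕ):ℝ) + 1 ≤ ((b - a : ℕ):ℝ) := by exact_mod_cast Nat.succ_le_of_lt i.isLt
    rw [hm] at this; linarith
  have hq0 : ∀ i, 0 < q i := fun i => div_pos (by linarith [hqa i]) hN
  have hq1 : ∀ i, q i < 1 := by
    intro i
    rw [hq_def, div_lt_one hN]
    have hi0 : (0:ℝ) ≤ (i:ℝ) := Nat.cast_nonneg _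
    have hb : (b:ℝ) ≤ n := by exact_mod_cast hbn
    nlinarith
  have hsq : ∀ i, s ≤ q i / 2 := by
    intro i
    rw [hq_def, hs_def]
    simp only
    rw [div_div, mul_comm ((n:ℝ) * ((n:ℝ) - 1)) 2]
    exact (div_le_div_iff_of_pos_right (by nlinarith)).mpr (hqa i)
  -- real-valued variables
  set X : Fin (b - a) → Ω → ℝ := fun i ω => (T i ω : ℝ) with hX_def
  have hXmeas : ∀ i, Measurable (X i) := fun i => measurable_from_top.comp (hmeas i)
  have hindep' : iIndepFun X μ :=
    hindep.comp (fun _ (x : ℕ) => (x : ℝ)) (fun _ => measurable_from_top)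
  have hint : ∀ i, Integrable (fun ω => Real.exp (s * X i ω)) μ := fun i =>
    pervar_integrable μ (T i) (hmeas i) (q i) s (hq0 i) (hq1 i) hs0.le (hsq i) (hgeom i)
  have hmgf_le : ∀ i, mgf (X i) μ s ≤ 2 := fun i =>
    pervar_mgf μ (T i) (hmeas i) (q i) s (hq0 i) (hq1 i) hs0.le (hsq i) (hgeom i)
  set t : ℝ := 2 * (n:ℝ) ^ 2 + 2 * γ * 2 ^ k * (n:ℝ) * Real.logb 2 n with ht_def
  have hmgf_sum : mgf (∑ i, X i) μ s = ∏ i, mgf (X i) μ s :=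
    hindep'.mgf_sum hXmeas Finset.univ
  have hprod : ∏ i, mgf (X i) μ s ≤ 2 ^ (b - a) := by
    calc ∏ i, mgf (X i) μ s ≤ ∏ _i : Fin (b - a), (2:ℝ) :=
          Finset.prod_le_prod (fun i _ => mgf_nonneg) (fun i _ => hmgf_le i)
      _ = 2 ^ (b - a) := by simp
  have hcher := measure_ge_le_exp_mul_mgf (μ := μ) (X := ∑ i, X i) t hs0.le
      (hindep'.integrable_exp_mul_sum hXmeas (fun i _ => hint i))
  -- numeric bound
  have hlogn : 0 ≤ Real.log n := Real.log_nonneg (by linarith)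
  have hlog2pos : 0 < Real.log 2 := Real.log_pos (by norm_num)
  have hlog2le1 : Real.log 2 ≤ 1 := by
    nlinarith [Real.log_le_sub_one_of_pos (by norm_num : (0:ℝ) < 2)]
  have hlogb : Real.log n ≤ Real.logb 2 n := by
    rw [Real.logb, le_div_iff₀ hlog2pos]
    calc Real.log n * Real.log 2 ≤ Real.log n * 1 :=
          mul_le_mul_of_nonneg_left hlog2le1 hlogn
      _ = Real.log n := mul_one _
  have hlogbnn : 0 ≤ Real.logb 2 n := le_trans hlogn hlogb
  have hnum : Real.exp (-s * t) * 2 ^ (b - a) ≤ (n:ℝ) ^ (-γ) := by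
    have h2pow : (2:ℝ) ^ (b - a) = Real.exp (((b - a : ℕ):ℝ) * Real.log 2) := by
      rw [Real.exp_nat_mul, Real.exp_log (by norm_num)]
    rw [h2pow, ← Real.exp_add, Real.rpow_def_of_pos (by positivity : (0:ℝ) < (n:ℝ))]
    apply Real.exp_le_exp.mpr
    have h1 : (a:ℝ) ≤ s * (2 * (n:ℝ) ^ 2) := by
      rw [hs_def, div_mul_eq_mul_div, le_div_iff₀ (by linarith only [hN])]
      nlinarith only [ha1, hn2, mul_nonneg (by positivity : (0:ℝ) ≤ (a:ℝ)) (Nat.cast_nonneg n)]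
    have hmlog : ((b - a : ℕ):ℝ) * Real.log 2 ≤ a := by
      calc ((b - a : ℕ):ℝ) * Real.log 2 ≤ ((b - a : ℕ):ℝ) * 1 :=
            mul_le_mul_of_nonneg_left hlog2le1 (Nat.cast_nonneg _)
        _ ≤ a := by rw [mul_one]; exact ham
    have hfac : 1 ≤ s * (2 * 2 ^ k * (n:ℝ)) := by
      rw [hs_def, div_mul_eq_mul_div, le_div_iff₀ (by linarith only [hN])]
      nlinarith only [hn2, (Nat.cast_nonneg n : (0:ℝ) ≤ (n:ℝ)),
        mul_le_mul_of_nonneg_right hna (Nat.cast_nonneg n : (0:ℝ) ≤ (n:ℝ))]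
    have h2 : γ * Real.log n ≤ s * (2 * γ * 2 ^ k * (n:ℝ) * Real.logb 2 n) := by
      calc γ * Real.log n ≤ γ * Real.logb 2 n :=
            mul_le_mul_of_nonneg_left hlogb hγ.le
        _ ≤ (γ * Real.logb 2 n) * (s * (2 * 2 ^ k * (n:ℝ))) :=
            le_mul_of_one_le_right (by positivity) hfac
        _ = s * (2 * γ * 2 ^ k * (n:ℝ) * Real.logb 2 n) := by ring
    have ht : s * t = s * (2 * (n:ℝ) ^ 2) + s * (2 * γ * 2 ^ k * (n:ℝ) * Real.logb 2 n) := by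
      rw [ht_def]; ring
    linarith
  -- tail bound
  have htail : (μ {ω | t ≤ (∑ i, X i) ω}).toReal ≤ (n:ℝ) ^ (-γ) := by
    refine le_trans hcher (le_trans ?_ hnum)
    have := hmgf_sum ▸ hprod
    exact mul_le_mul_of_nonneg_left this (Real.exp_pos _).le
  -- final assembly
  have hsummeas : Measurable (fun ω => ∑ i, X i ω) :=
    Finset.measurable_sum _ (fun i _ => hXmeas i)
  have hAmeas : MeasurableSet {ω | ∑ i, (T i ω : ℝ) ≤ t} :=
    measurableSet_le (by exact hsummeas) measurable_const
  have hcompl : μ {ω | ∑ i, (T i ω : ℝ) ≤ t}ᶜ ≤ ENNReal.ofReal ((n:ℝ) ^ (-γ)) := by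
    have hsub : {ω | ∑ i, (T i ω : ℝ) ≤ t}ᶜ ⊆ {ω | t ≤ (∑ i, X i) ω} := by
      intro ω hω
      simp only [Set.mem_compl_iff, Set.mem_setOf_eq, not_le] at hω
      simp only [Set.mem_setOf_eq, Finset.sum_apply]
      exact le_of_lt hω
    calc μ {ω | ∑ i, (T i ω : ℝ) ≤ t}ᶜ ≤ μ {ω | t ≤ (∑ i, X i) ω} := measure_mono hsub
      _ = ENNReal.ofReal ((μ {ω | t ≤ (∑ i, X i) ω}).toReal) :=
          (ENNReal.ofReal_toReal (measure_ne_top μ _)).symm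
      _ ≤ ENNReal.ofReal ((n:ℝ) ^ (-γ)) := ENNReal.ofReal_le_ofReal htail
  have h1A : μ {ω | ∑ i, (T i ω : ℝ) ≤ t} + μ {ω | ∑ i, (T i ω : ℝ) ≤ t}ᶜ = 1 :=
    (measure_add_measure_compl hAmeas).trans measure_univ
  calc ENNReal.ofReal (1 - (n:ℝ) ^ (-γ))
      = ENNReal.ofReal 1 - ENNReal.ofReal ((n:ℝ) ^ (-γ)) :=
        ENNReal.ofReal_sub 1 (Real.rpow_nonneg (Nat.cast_nonneg n) _)
    _ ≤ 1 - μ {ω | ∑ i, (T i ω : ℝ) ≤ t}ᶜ := by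
        rw [ENNReal.ofReal_one]
        exact tsub_le_tsub_left hcompl 1
    _ ≤ μ {ω | ∑ i, (T i ω : ℝ) ≤ t} :=
        tsub_le_iff_right.mpr (le_of_eq h1A.symm)
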